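/- Let C₁, …, C_m ⊆ F_{q^m}^t be linear codes with minimum Hamming distances d₁, …, d_m. Then the sum-rank code SR(C₁,…,C_m) of matrix size m × m and block length t has minimum sum-rank distance at least min{d₁, 2d₂, 3d₃, …, m·d_m}. -/
import Mathlib


/-- Let `C₁, …, C_m ⊆ F_{q^m}^t` be linear codes with minimum Hamming distances
`d₁, …, d_m`.  The sum-rank code `SR(C₁,…,C_m)` of matrix size `m × m`, whose block `j`
is (the matrix of) the `q`-polynomial map `x ↦ ∑ᵢ c_{ij} x^{q^{i-1}}` on `F_{q^m}`, has
minimum sum-rank distance at least `min{d₁, 2d₂, …, m d_m}`. -/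
theorem sr_min_distance_lower_bound (q m t : ℕ) (hm : 0 < m)
    (Fq K : Type) [Field Fq] [Fintype Fq] [Field K] [Fintype K] [DecidableEq K]
    [Algebra Fq K]
    (hq : ∃ p k : ℕ, p.Prime ∧ 0 < k ∧ q = p ^ k)
    (hcq : Fintype.card Fq = q) (hcK : Fintype.card K = q ^ m)
    (C : Fin m → Submodule K (Fin t → K)) (d : Fin m → ℕ)
    (hd : ∀ i, ∀ c ∈ C i, c ≠ 0 → d i ≤ hammingNorm c) :
    ∀ cs : Fin m → Fin t → K, (∀ i, cs i ∈ C i) → cs ≠ 0 →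
      Finset.univ.inf' (Finset.univ_nonempty_iff.mpr ⟨⟨0, hm⟩⟩)
          (fun i : Fin m => ((i : ℕ) + 1) * d i) ≤
        ∑ j : Fin t, Module.finrank Fq (Submodule.span Fq
          (Set.range fun x : K => ∑ i : Fin m, cs i j * x ^ q ^ (i : ℕ))) := by
  intro cs hcs hne
  obtain ⟨p, k, hp, hk, hqpk⟩ := hq
  haveI : Fact p.Prime := ⟨hp⟩
  have hq2 : 2 ≤ q := by
    subst hqpk
    calc 2 ≤ p := hp.two_le
      _ = p ^ 1 := (pow_one p).symm
      _ ≤ p ^ k := Nat.pow_le_pow_right hp.pos hk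
  -- characteristic of K is p
  haveI hcharK : CharP K p := by
    obtain ⟨n, hrp, hcard⟩ := FiniteField.card K (ringChar K)
    have heq : p ^ (k * m) = (ringChar K) ^ (n : ℕ) := by
      rw [← hcard, hcK, hqpk, ← pow_mul]
    have hkm : 0 < k * m := Nat.mul_pos hk hm
    have hdvd : p ∣ (ringChar K) ^ (n : ℕ) := heq ▸ dvd_pow_self p hkm.ne'
    have hpr : p = ringChar K :=
      (Nat.prime_dvd_prime_iff_eq hp hrp).mp (hp.dvd_of_dvd_pow hdvd)
    exact hpr ▸ ringChar.charP K
  -- Frobenius facts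
  have frob_add : ∀ (n : ℕ) (x y : K), (x + y) ^ q ^ n = x ^ q ^ n + y ^ q ^ n := by
    intro n x y
    rw [hqpk, ← pow_mul]
    exact add_pow_char_pow x y p (k * n)
  have frob_inj : ∀ (n : ℕ) (x y : K), x ^ q ^ n = y ^ q ^ n → x = y := by
    intro n x y hxy
    have h0 : (x - y) ^ q ^ n = 0 := by
      rw [hqpk, ← pow_mul] at hxy ⊢
      rw [sub_pow_char_pow, hxy, sub_self]
    have := pow_eq_zero_iff (by positivity : q ^ n ≠ 0) |>.mp h0
    exact sub_eq_zero.mp this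
  have hfix : ∀ (n : ℕ) (a : Fq), a ^ q ^ n = a := by
    intro n a
    rw [← hcq]
    exact FiniteField.pow_card_pow n a
  -- the Fq-linear maps
  let L : Fin t → (K →ₗ[Fq] K) := fun j =>
    { toFun := fun x => ∑ i : Fin m, cs i j * x ^ q ^ (i : ℕ)
      map_add' := by
        intro x y
        rw [← Finset.sum_add_distrib]
        exact Finset.sum_congr rfl fun i _ => by rw [frob_add, mul_add]
      map_smul' := by
        intro a x
        simp only [RingHom.id_apply, Algebra.smul_def, Finset.mul_sum]
        refine Finset.sum_congr rfl fun i _ => ?_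
        rw [mul_pow, ← map_pow, hfix]
        ring }
  have hLapp : ∀ j x, L j x = ∑ i : Fin m, cs i j * x ^ q ^ (i : ℕ) := fun j x => rfl
  haveI : Module.Finite Fq K := (Module.finite_iff_finite (R := Fq)).mpr inferInstance
  have hfr : Module.finrank Fq K = m := by
    have h1 : Fintype.card K = Fintype.card Fq ^ Module.finrank Fq K := Module.card_eq_pow_finrank
    rw [hcK, hcq] at h1
    exact (Nat.pow_right_injective hq2 h1.symm)
  -- minimal nonzero index
  have hSne : (Finset.univ.filter fun i => cs i ≠ 0).Nonempty := by
    obtain ⟨i, hi⟩ := Function.ne_iff.mp hne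
    exact ⟨i, Finset.mem_filter.mpr ⟨Finset.mem_univ _, hi⟩⟩
  set i₀ := (Finset.univ.filter fun i => cs i ≠ 0).min' hSne with hi₀def
  have hi₀ : cs i₀ ≠ 0 :=
    (Finset.mem_filter.mp ((Finset.univ.filter fun i => cs i ≠ 0).min'_mem hSne)).2
  have hmin : ∀ i : Fin m, (i : ℕ) < (i₀ : ℕ) → cs i = 0 := by
    intro i hlt
    by_contra h
    have := Finset.min'_le (Finset.univ.filter fun i => cs i ≠ 0) i
      (Finset.mem_filter.mpr ⟨Finset.mem_univ _, h⟩)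
    rw [← hi₀def] at this
    exact absurd (Fin.le_def.mp this) (by omega)
  -- key rank bound
  have key : ∀ j : Fin t, cs i₀ j ≠ 0 →
      (i₀ : ℕ) + 1 ≤ Module.finrank Fq (LinearMap.range (L j)) := by
    intro j hj
    set g : Polynomial K :=
      ∑ i : Fin m, Polynomial.C (cs i j) * Polynomial.X ^ (q ^ ((i : ℕ) - (i₀ : ℕ))) with hg
    have hgeval : ∀ x : K, g.eval (x ^ q ^ (i₀ : ℕ)) = L j x := by
      intro x
      rw [hLapp, hg, Polynomial.eval_finset_sum]
      refine Finset.sum_congr rfl fun i _ => ?_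
      simp only [Polynomial.eval_mul, Polynomial.eval_C, Polynomial.eval_pow,
        Polynomial.eval_X]
      rcases le_or_gt (i₀ : ℕ) (i : ℕ) with h | h
      · have hexp : (i₀ : ℕ) + ((i : ℕ) - (i₀ : ℕ)) = (i : ℕ) := by omega
        rw [← pow_mul, ← pow_add, hexp]
      · have h0 : cs i = 0 := hmin i h
        rw [congrFun h0 j]
        simp
    have hgcoeff : g.coeff 1 = cs i₀ j := by
      rw [hg, Polynomial.finset_sum_coeff]
      rw [Finset.sum_eq_single i₀]
      · simp
      · intro i _ hne'
        rw [Polynomial.coeff_C_mul, Polynomial.coeff_X_pow]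
        rcases lt_or_gt_of_ne (fun h => hne' (Fin.ext h) : (i : ℕ) ≠ (i₀ : ℕ)) with h | h
        · rw [congrFun (hmin i h) j]
          simp
        · have h1 : q ≤ q ^ ((i : ℕ) - (i₀ : ℕ)) := by
            conv_lhs => rw [← pow_one q]
            exact Nat.pow_le_pow_right (by omega) (by omega)
          rw [if_neg (by omega : ¬(1 : ℕ) = q ^ ((i : ℕ) - (i₀ : ℕ))), mul_zero]
      · intro h
        exact absurd (Finset.mem_univ i₀) h
    have hg0 : g ≠ 0 := by
      intro h0
      apply hj
      rw [← hgcoeff, h0, Polynomial.coeff_zero]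
    -- kernel bound
    haveI : Fintype (LinearMap.ker (L j)) := Fintype.ofFinite _
    have hroot : ∀ x : LinearMap.ker (L j), (x : K) ^ q ^ (i₀ : ℕ) ∈ g.roots.toFinset := by
      intro x
      rw [Multiset.mem_toFinset, Polynomial.mem_roots hg0]
      rw [Polynomial.IsRoot, hgeval, LinearMap.map_coe_ker]
    have hcard : Fintype.card (LinearMap.ker (L j)) ≤ g.roots.toFinset.card := by
      have hle := Fintype.card_le_of_injective
        (fun x : LinearMap.ker (L j) =>
          (⟨(x : K) ^ q ^ (i₀ : ℕ), hroot x⟩ : {y // y ∈ g.roots.toFinset}))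
        (fun x y hxy => Subtype.ext (frob_inj _ _ _ (congrArg Subtype.val hxy)))
      exact hle.trans_eq (Fintype.card_coe _)
    have hdeg : g.natDegree ≤ q ^ (m - 1 - (i₀ : ℕ)) := by
      rw [hg]
      apply Polynomial.natDegree_sum_le_of_forall_le
      intro i _
      refine (Polynomial.natDegree_C_mul_X_pow_le _ _).trans ?_
      exact Nat.pow_le_pow_right (by omega) (by have := i.isLt; omega)
    have hcard2 : Fintype.card (LinearMap.ker (L j)) ≤ q ^ (m - 1 - (i₀ : ℕ)) := by
      calc Fintype.card (LinearMap.ker (L j)) ≤ g.roots.toFinset.card := hcard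
        _ ≤ Multiset.card g.roots := Multiset.toFinset_card_le _
        _ ≤ g.natDegree := Polynomial.card_roots' g
        _ ≤ q ^ (m - 1 - (i₀ : ℕ)) := hdeg
    have hkerfr : Module.finrank Fq (LinearMap.ker (L j)) ≤ m - 1 - (i₀ : ℕ) := by
      have h1 : Fintype.card (LinearMap.ker (L j)) =
          Fintype.card Fq ^ Module.finrank Fq (LinearMap.ker (L j)) := Module.card_eq_pow_finrank
      rw [hcq] at h1
      rw [h1] at hcard2
      exact (Nat.pow_le_pow_iff_right hq2).mp hcard2
    have hrn := LinearMap.finrank_range_add_finrank_ker (L j)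
    rw [hfr] at hrn
    have := i₀.isLt
    omega
  -- identify the span with the range
  have hspan : ∀ j : Fin t,
      Submodule.span Fq (Set.range fun x : K => ∑ i : Fin m, cs i j * x ^ q ^ (i : ℕ)) =
        LinearMap.range (L j) := by
    intro j
    have : (Set.range fun x : K => ∑ i : Fin m, cs i j * x ^ q ^ (i : ℕ)) =
        (LinearMap.range (L j) : Set K) := by
      rw [LinearMap.coe_range]
      rfl
    rw [this, Submodule.span_eq]
  -- assembly
  set T := Finset.univ.filter (fun j : Fin t => cs i₀ j ≠ 0) with hT
  have hham : hammingNorm (cs i₀) = T.card := by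
    rw [hT]
    rfl
  calc Finset.univ.inf' (Finset.univ_nonempty_iff.mpr ⟨⟨0, hm⟩⟩)
        (fun i : Fin m => ((i : ℕ) + 1) * d i)
      ≤ ((i₀ : ℕ) + 1) * d i₀ := Finset.inf'_le _ (Finset.mem_univ i₀)
    _ ≤ ((i₀ : ℕ) + 1) * hammingNorm (cs i₀) :=
        Nat.mul_le_mul_left _ (hd i₀ _ (hcs i₀) hi₀)
    _ = ∑ _j ∈ T, ((i₀ : ℕ) + 1) := by
        rw [Finset.sum_const, smul_eq_mul, hham, mul_comm]
    _ ≤ ∑ j ∈ T, Module.finrank Fq (LinearMap.range (L j)) := by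
        refine Finset.sum_le_sum fun j hjT => ?_
        exact key j (Finset.mem_filter.mp hjT).2
    _ ≤ ∑ j : Fin t, Module.finrank Fq (LinearMap.range (L j)) :=
        Finset.sum_le_sum_of_subset (Finset.filter_subset _ _)
    _ = ∑ j : Fin t, Module.finrank Fq (Submodule.span Fq
          (Set.range fun x : K => ∑ i : Fin m, cs i j * x ^ q ^ (i : ℕ))) := by
        exact Finset.sum_congr rfl fun j _ => by rw [hspan j]
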